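/- If P : ℝ^n → ℝ^n is continuous and strictly monotone with a zero at x*, then there exists a class-K function φ (continuous, strictly increasing, φ(0) = 0) such that ⟨x - x*, P(x)⟩ ≥ φ(‖x - x*‖) for all x in any fixed compact set containing x*. -/

import Mathlib

/-- If `P : ℝ^n → ℝ^n` is continuous and strictly monotone with a zero at `x*`, then on any
fixed compact set `K` containing `x*` there is a class-`K` function `φ` such that
`⟪x - x*, P x⟫ ≥ φ(‖x - x*‖)` for all `x ∈ K`. -/
theorem stmt_2 {n : ℕ} (P : EuclideanSpace ℝ (Fin n) → EuclideanSpace ℝ (Fin n))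
    (hc : Continuous P)
    (hmono : ∀ x y, x ≠ y → (0 : ℝ) < inner ℝ (x - y) (P x - P y))
    (xstar : EuclideanSpace ℝ (Fin n)) (hz : P xstar = 0)
    (K : Set (EuclideanSpace ℝ (Fin n))) (hK : IsCompact K) (hxK : xstar ∈ K) :
    ∃ φ : ℝ → ℝ, ContinuousOn φ (Set.Ici 0) ∧ StrictMonoOn φ (Set.Ici 0) ∧ φ 0 = 0 ∧
      ∀ x ∈ K, φ ‖x - xstar‖ ≤ (inner ℝ (x - xstar) (P x) : ℝ) := by
  classical
  set f : EuclideanSpace ℝ (Fin n) → ℝ := fun x => inner ℝ (x - xstar) (P x) with hf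
  have hfpos : ∀ x, x ≠ xstar → 0 < f x := by
    intro x hx
    have h := hmono x xstar hx
    simpa [hf, hz] using h
  have hfnonneg : ∀ x, 0 ≤ f x := by
    intro x
    rcases eq_or_ne x xstar with rfl | hx
    · simp [hf]
    · exact (hfpos x hx).le
  have hfc : Continuous f := by
    exact Continuous.inner (continuous_id.sub continuous_const) hc
  -- the radius bound
  set R : ℝ := sSup ((fun x => ‖x - xstar‖) '' K) with hRdef
  have hKne : K.Nonempty := ⟨xstar, hxK⟩
  have hbddR : BddAbove ((fun x => ‖x - xstar‖) '' K) :=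
    (hK.image ((continuous_id.sub continuous_const).norm)).bddAbove
  have hrR : ∀ x ∈ K, ‖x - xstar‖ ≤ R := fun x hx =>
    le_csSup hbddR ⟨x, hx, rfl⟩
  have hR0 : 0 ≤ R := by
    have := hrR xstar hxK
    simpa using this
  have hR1 : (0:ℝ) < 1 + R := by linarith
  -- the sets and infima
  set S : ℝ → Set (EuclideanSpace ℝ (Fin n)) := fun s => {x ∈ K | s ≤ ‖x - xstar‖}
    with hSdef
  have hScl : ∀ s, IsCompact (S s) := by
    intro s
    apply hK.inter_right
    exact isClosed_le continuous_const ((continuous_id.sub continuous_const).norm)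
  have hSsub : ∀ {s₁ s₂ : ℝ}, s₁ ≤ s₂ → S s₂ ⊆ S s₁ := by
    intro s₁ s₂ h x hx
    exact ⟨hx.1, le_trans h hx.2⟩
  set q : ℝ → ℝ := fun s => sInf (f '' S s) with hqdef
  have hqbdd : ∀ s, BddBelow (f '' S s) := by
    intro s
    exact ⟨0, by rintro y ⟨x, hx, rfl⟩; exact hfnonneg x⟩
  have hq_le : ∀ s, ∀ x ∈ S s, q s ≤ f x := by
    intro s x hx
    exact csInf_le (hqbdd s) ⟨x, hx, rfl⟩
  have hqnonneg : ∀ s, (S s).Nonempty → 0 ≤ q s := by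
    intro s hne
    exact le_csInf (hne.image f) (by rintro y ⟨x, hx, rfl⟩; exact hfnonneg x)
  have hqpos : ∀ s, 0 < s → (S s).Nonempty → 0 < q s := by
    intro s hs hne
    obtain ⟨x₀, hx₀, hmin⟩ := (hScl s).exists_isMinOn hne (hfc.continuousOn)
    have hx₀ne : x₀ ≠ xstar := by
      intro h
      have : s ≤ ‖x₀ - xstar‖ := hx₀.2
      rw [h] at this
      simp at this
      linarith
    have : 0 < f x₀ := hfpos x₀ hx₀ne
    have hle : f x₀ ≤ q s := le_csInf (hne.image f) (by rintro y ⟨x, hx, rfl⟩; exact hmin hx)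
    linarith
  set h : ℝ → ℝ := fun s => if (S s).Nonempty then min 1 (q s) else 1 with hhdef
  have hh0 : ∀ s, 0 ≤ h s := by
    intro s
    simp only [hhdef]
    split_ifs with hne
    · exact le_min one_pos.le (hqnonneg s hne)
    · exact one_pos.le
  have hh1 : ∀ s, h s ≤ 1 := by
    intro s
    simp only [hhdef]
    split_ifs with hne
    · exact min_le_left _ _
    · exact le_refl _
  have hhpos : ∀ s, 0 < s → 0 < h s := by
    intro s hs
    simp only [hhdef]
    split_ifs with hne
    · exact lt_min one_pos (hqpos s hs hne)
    · exact one_pos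
  have hhmono : Monotone h := by
    intro s₁ s₂ hs
    simp only [hhdef]
    by_cases h2 : (S s₂).Nonempty
    · have h1 : (S s₁).Nonempty := h2.mono (hSsub hs)
      rw [if_pos h1, if_pos h2]
      exact min_le_min (le_refl _)
        (csInf_le_csInf (hqbdd s₁) (h2.image f) (Set.image_mono (hSsub hs)))
    · rw [if_neg h2]
      split_ifs with h1
      · exact min_le_left _ _
      · exact le_refl _
  have hint : ∀ a b : ℝ, IntervalIntegrable h MeasureTheory.volume a b := by
    intro a b
    exact hhmono.intervalIntegrable
  set φ : ℝ → ℝ := fun r => (∫ s in (0:ℝ)..r, h s) / (1 + R) with hφdef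
  refine ⟨φ, ?_, ?_, ?_, ?_⟩
  · -- continuity: Lipschitz
    have : LipschitzWith 1 φ := by
      apply LipschitzWith.of_dist_le_mul
      intro a b
      have hsplit : (∫ s in (0:ℝ)..a, h s) - (∫ s in (0:ℝ)..b, h s)
          = ∫ s in b..a, h s := by
        rw [← intervalIntegral.integral_add_adjacent_intervals (hint 0 b) (hint b a)]
        ring
      have hbound : |∫ s in b..a, h s| ≤ 1 * |a - b| := by
        have := intervalIntegral.norm_integral_le_of_norm_le_const
          (C := 1) (f := h) (a := b) (b := a) (by
            intro x _
            rw [Real.norm_eq_abs, abs_of_nonneg (hh0 x)]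
            exact hh1 x)
        simpa [Real.norm_eq_abs, abs_sub_comm] using this
      rw [Real.dist_eq, Real.dist_eq]
      simp only [hφdef]
      rw [div_sub_div_same, abs_div, abs_of_pos hR1, hsplit]
      calc |∫ s in b..a, h s| / (1 + R) ≤ (1 * |a - b|) / (1 + R) := by gcongr
        _ ≤ 1 * |a - b| := by
            rw [div_le_iff₀ hR1]
            nlinarith [abs_nonneg (a - b)]
    exact this.continuous.continuousOn
  · -- strict monotonicity on [0, ∞)
    intro a ha b hb hab
    have ha0 : (0:ℝ) ≤ a := ha
    set c : ℝ := (a + b) / 2 with hcdef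
    have hc0 : 0 < c := by simp only [hcdef]; linarith
    have hac : a ≤ c := by simp only [hcdef]; linarith
    have hcb : c ≤ b := by simp only [hcdef]; linarith
    have h1 : 0 ≤ ∫ s in a..c, h s :=
      intervalIntegral.integral_nonneg hac (fun s _ => hh0 s)
    have h2 : (b - c) * h c ≤ ∫ s in c..b, h s := by
      have := intervalIntegral.integral_mono_on (f := fun _ => h c) (g := h) hcb
        intervalIntegrable_const (hint c b) (fun s hs => hhmono hs.1)
      simpa [intervalIntegral.integral_const, smul_eq_mul] using this
    have hpos : 0 < ∫ s in a..b, h s := by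
      rw [← intervalIntegral.integral_add_adjacent_intervals (hint a c) (hint c b)]
      have : 0 < (b - c) * h c := mul_pos (by linarith) (hhpos c hc0)
      linarith
    have hsum : (∫ s in (0:ℝ)..a, h s) + ∫ s in a..b, h s = ∫ s in (0:ℝ)..b, h s :=
      intervalIntegral.integral_add_adjacent_intervals (hint 0 a) (hint a b)
    have hdivpos : 0 < (∫ s in a..b, h s) / (1 + R) := div_pos hpos hR1
    simp only [hφdef]
    rw [← hsum, add_div]
    linarith
  · simp [hφdef]
  · intro x hx
    rcases eq_or_ne x xstar with rfl | hne
    · simp [hφdef, hf]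
    · set r : ℝ := ‖x - xstar‖ with hrdef
      have hr : 0 < r := by
        rw [hrdef]
        exact norm_pos_iff.mpr (sub_ne_zero.mpr hne)
      have hxS : x ∈ S r := ⟨hx, le_refl _⟩
      have hSne : (S r).Nonempty := ⟨x, hxS⟩
      have hhr : h r = min 1 (q r) := if_pos hSne
      have hle1 : (∫ s in (0:ℝ)..r, h s) ≤ r * h r := by
        have := intervalIntegral.integral_mono_on (f := h) (g := fun _ => h r) hr.le
          (hint 0 r) intervalIntegrable_const (fun s hs => hhmono hs.2)
        simpa [intervalIntegral.integral_const, smul_eq_mul] using this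
      have hrR' : r ≤ R := hrR x hx
      have hφh : φ r ≤ h r := by
        simp only [hφdef]
        rw [div_le_iff₀ hR1]
        calc (∫ s in (0:ℝ)..r, h s) ≤ r * h r := hle1
          _ ≤ (1 + R) * h r := mul_le_mul_of_nonneg_right (by linarith) (hh0 r)
          _ = h r * (1 + R) := mul_comm _ _
      calc φ r ≤ h r := hφh
        _ ≤ q r := hhr ▸ min_le_right 1 (q r)
        _ ≤ f x := hq_le r x hxS
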